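/- Let $I_t = \alpha_t I_0 + \beta_t I_1$ and $\tilde I_t = \tilde\alpha_t I_0 + \tilde\beta_t I_1$ be two interpolants built from the same pair $(I_0, I_1)$, with $\alpha, \beta, \tilde\alpha, \tilde\beta$ continuous, $\alpha_0 = \beta_1 = 1$, $\alpha_1 = \beta_0 = 0$, and $\beta_t, \tilde\beta_t > 0$ for $t \in (0,1]$. Then for every $t \in (0,1]$ there exists $t^* \in [0,1]$ such that $\alpha_{t^*}/\beta_{t^*} = \tilde\alpha_t/\tilde\beta_t$, and for such $t^*$ the conditional posteriors satisfy $\mathrm{Law}(I_1 \mid \tilde I_t = x) = \mathrm{Law}\big(I_1 \mid I_{t^*} = \tfrac{\beta_{t^*}}{\tilde\beta_t} x\big)$. -/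

import Mathlib

open MeasureTheory ProbabilityTheory

lemma map_prod_eq_compProd_condDistrib {Ω E : Type*} [MeasurableSpace Ω]
    [MeasurableSpace E] [StandardBorelSpace E] [Nonempty E]
    (μ : Measure Ω) [IsFiniteMeasure μ] {X Y : Ω → E}
    (hX : Measurable X) (hY : Measurable Y) :
    μ.map (fun ω => (X ω, Y ω)) = μ.map X ⊗ₘ condDistrib Y X μ := by
  have hfin : IsFiniteMeasure (μ.map (fun ω => (X ω, Y ω))) :=
    Measure.isFiniteMeasure_map _ _
  rw [condDistrib_def]
  conv_lhs => rw [← (μ.map fun ω => (X ω, Y ω)).disintegrate (μ.map fun ω => (X ω, Y ω)).condKernel]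
  rw [Measure.fst_map_prodMk hY]

lemma condDistrib_smul_ae {Ω E : Type*} [MeasurableSpace Ω]
    [MeasurableSpace E] [StandardBorelSpace E] [Nonempty E]
    [AddCommGroup E] [Module ℝ E] [MeasurableSMul ℝ E]
    (μ : Measure Ω) [IsProbabilityMeasure μ] {X Y : Ω → E}
    (hX : Measurable X) (hY : Measurable Y) (c : ℝ) (hc : c ≠ 0) :
    ∀ᵐ x ∂(μ.map (fun ω => c • X ω)),
      condDistrib Y (fun ω => c • X ω) μ x = condDistrib Y X μ (c⁻¹ • x) := by
  set κ : ProbabilityTheory.Kernel E E :=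
    (condDistrib Y X μ).comap (fun x => c⁻¹ • x) (measurable_const_smul c⁻¹) with hκdef
  have hX' : Measurable (fun ω => c • X ω) := (measurable_const_smul c).comp hX
  have hκ : μ.map (fun ω => ((fun ω => c • X ω) ω, Y ω)) = μ.map (fun ω => c • X ω) ⊗ₘ κ := by
    have hbase := map_prod_eq_compProd_condDistrib μ hX hY
    ext s hs
    have hmap : (fun ω => (c • X ω, Y ω))
        = (fun p : E × E => (c • p.1, p.2)) ∘ (fun ω => (X ω, Y ω)) := rfl
    have hmeas2 : Measurable (fun p : E × E => (c • p.1, p.2)) :=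
      ((measurable_const_smul c).comp measurable_fst).prodMk measurable_snd
    rw [hmap, ← Measure.map_map hmeas2 (hX.prodMk hY), hbase,
      Measure.map_apply hmeas2 hs, Measure.compProd_apply (hmeas2 hs),
      Measure.compProd_apply hs]
    have hmm : μ.map (fun ω => c • X ω) = (μ.map X).map (fun x => c • x) :=
      (Measure.map_map (measurable_const_smul c) hX).symm
    rw [hmm, lintegral_map (Kernel.measurable_kernel_prodMk_left hs) (measurable_const_smul c)]
    refine lintegral_congr fun y => ?_
    have h1 : κ (c • y) = condDistrib Y X μ y := by
      simp [hκdef, Kernel.comap_apply, inv_smul_smul₀ hc]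
    rw [h1]
    rfl
  have := condDistrib_ae_eq_of_measure_eq_compProd (fun ω => c • X ω) hY.aemeasurable hκ
  filter_upwards [this] with x hx
  rw [hx]
  simp [hκdef, Kernel.comap_apply]

/-- Reparametrization of the conditional posterior between two interpolants built
from the same pair `(I_0, I_1)`: for every `t ∈ (0,1]` there exists `t* ∈ [0,1]`
with `α_{t*}/β_{t*} = α̃_t/β̃_t`, and for such `t*` (with `β_{t*} ≠ 0`, i.e.
`t* ∈ (0,1]`) the posteriors satisfy
`Law(I_1 | Ĩ_t = x) = Law(I_1 | I_{t*} = (β_{t*}/β̃_t) x)`. -/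
theorem interpolant_posterior_reparametrization
    {d : ℕ} {Ω : Type*} [MeasurableSpace Ω] (μ : Measure Ω) [IsProbabilityMeasure μ]
    (I0 I1 : Ω → EuclideanSpace ℝ (Fin d))
    (hI0 : Measurable I0) (hI1 : Measurable I1)
    (hindep : IndepFun I0 I1 μ)
    (α β tα tβ : ℝ → ℝ)
    (hαc : Continuous α) (hβc : Continuous β) (htαc : Continuous tα) (htβc : Continuous tβ)
    (hα0 : α 0 = 1) (hβ1 : β 1 = 1) (hα1 : α 1 = 0) (hβ0 : β 0 = 0)
    (htα0 : tα 0 = 1) (htβ1 : tβ 1 = 1) (htα1 : tα 1 = 0) (htβ0 : tβ 0 = 0)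
    (hαnn : ∀ t ∈ Set.Icc (0 : ℝ) 1, 0 ≤ α t) (htαnn : ∀ t ∈ Set.Icc (0 : ℝ) 1, 0 ≤ tα t)
    (hβpos : ∀ t ∈ Set.Ioc (0 : ℝ) 1, 0 < β t)
    (htβpos : ∀ t ∈ Set.Ioc (0 : ℝ) 1, 0 < tβ t) :
    ∀ t ∈ Set.Ioc (0 : ℝ) 1,
      (∃ ts ∈ Set.Icc (0 : ℝ) 1, α ts / β ts = tα t / tβ t)
      ∧ ∀ ts ∈ Set.Ioc (0 : ℝ) 1, α ts / β ts = tα t / tβ t →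
          ∀ᵐ x ∂(μ.map (fun ω => tα t • I0 ω + tβ t • I1 ω)),
            condDistrib I1 (fun ω => tα t • I0 ω + tβ t • I1 ω) μ x =
              condDistrib I1 (fun ω => α ts • I0 ω + β ts • I1 ω) μ
                ((β ts / tβ t) • x) := by
  intro t ht
  have htβ : 0 < tβ t := htβpos t ht
  constructor
  · -- existence via IVT on g s = α s * tβ t - tα t * β s
    set g : ℝ → ℝ := fun s => α s * tβ t - tα t * β s with hg
    have hgc : ContinuousOn g (Set.Icc 0 1) :=
      ((hαc.mul continuous_const).sub (continuous_const.mul hβc)).continuousOn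
    have hg1 : g 1 ≤ 0 := by
      simp only [hg, hα1, hβ1]
      have := htαnn t (Set.mem_Icc.2 ⟨le_of_lt ht.1, ht.2⟩)
      nlinarith
    have hg0 : 0 ≤ g 0 := by
      simp only [hg, hα0, hβ0]
      nlinarith
    obtain ⟨ts, hts, hgts⟩ := intermediate_value_Icc' (by norm_num : (0:ℝ) ≤ 1) hgc
      (Set.mem_Icc.2 ⟨hg1, hg0⟩)
    refine ⟨ts, hts, ?_⟩
    have hts0 : ts ≠ 0 := by
      intro h
      rw [h] at hgts
      simp only [hg, hα0, hβ0] at hgts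
      nlinarith
    have hβts : 0 < β ts := hβpos ts ⟨lt_of_le_of_ne hts.1 (Ne.symm hts0), hts.2⟩
    rw [div_eq_div_iff (ne_of_gt hβts) (ne_of_gt htβ)]
    have h : α ts * tβ t - tα t * β ts = 0 := hgts
    linarith
  · intro ts hts hratio
    have hβts : 0 < β ts := hβpos ts hts
    set c : ℝ := tβ t / β ts with hc
    have hc0 : c ≠ 0 := ne_of_gt (div_pos htβ hβts)
    set X : Ω → EuclideanSpace ℝ (Fin d) := fun ω => α ts • I0 ω + β ts • I1 ω with hX
    have hXm : Measurable X := (hI0.const_smul (α ts)).add (hI1.const_smul (β ts))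
    have hfun : (fun ω => tα t • I0 ω + tβ t • I1 ω) = fun ω => c • X ω := by
      funext ω
      simp only [hX, smul_add, smul_smul]
      congr 2
      · rw [hc]
        field_simp
        rw [div_eq_div_iff (ne_of_gt hβts) (ne_of_gt htβ)] at hratio
        linarith
      · rw [hc]; field_simp
    have hcinv : (β ts / tβ t) = c⁻¹ := by
      rw [hc, inv_div]
    rw [hfun, hcinv]
    exact condDistrib_smul_ae μ hXm hI1 c hc0
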